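/- Let Ω ⊆ ℝ^N be a measurable set and G a C¹ Orlicz function (continuous, convex, increasing, G(0)=0, satisfying the Δ₂-condition G(2x) ≤ K·G(x) with K > 2 and G(x)/x → 0 as x → 0). Suppose (u_n) is a sequence of measurable functions with sup_n ∫_Ω G(|u_n|) dx < ∞, u_n → u almost everywhere on Ω, and ∫_Ω G(|u|) dx < ∞. Then lim_{n→∞} ( ∫_Ω G(|u_n|) dx − ∫_Ω G(|u_n − u|) dx ) = ∫_Ω G(|u|) dx. -/
import Mathlib

open MeasureTheory Filter

lemma BL_nonneg (G : ℝ → ℝ) (hmono : MonotoneOn G (Set.Ici 0)) (hG0 : G 0 = 0)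
    {x : ℝ} (hx : 0 ≤ x) : 0 ≤ G x := by
  have := hmono Set.self_mem_Ici hx hx
  rwa [hG0] at this

lemma BL_pow (G : ℝ → ℝ) (K : ℝ) (hK : 2 < K)
    (hΔ2 : ∀ x : ℝ, 0 ≤ x → G (2 * x) ≤ K * G x) :
    ∀ m : ℕ, ∀ x : ℝ, 0 ≤ x → G (2 ^ m * x) ≤ K ^ m * G x := by
  intro m
  induction m with
  | zero => intro x hx; simp
  | succ n ih =>
    intro x hx
    have h1 : G (2 ^ (n + 1) * x) = G (2 * (2 ^ n * x)) := by ring_nf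
    have h2 := hΔ2 (2 ^ n * x) (by positivity)
    have h3 := ih x hx
    have hK0 : (0:ℝ) ≤ K := by linarith
    calc G (2 ^ (n + 1) * x) ≤ K * G (2 ^ n * x) := h1 ▸ h2
      _ ≤ K * (K ^ n * G x) := mul_le_mul_of_nonneg_left h3 hK0
      _ = K ^ (n + 1) * G x := by ring

lemma BL_key (G : ℝ → ℝ) (K : ℝ)
    (hconv : ConvexOn ℝ (Set.Ici 0) G)
    (hmono : MonotoneOn G (Set.Ici 0))
    (hG0 : G 0 = 0) (hK : 2 < K)
    (hΔ2 : ∀ x : ℝ, 0 ≤ x → G (2 * x) ≤ K * G x)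
    {ε : ℝ} (hε : 0 < ε) :
    ∃ C : ℝ, 0 ≤ C ∧ ∀ a b : ℝ, 0 ≤ a → 0 ≤ b →
      G (a + b) ≤ (1 + ε) * G a + C * G b := by
  have hK1 : (1:ℝ) < K - 1 := by linarith
  set s : ℝ := min 1 (ε / (K - 1)) with hs
  have hs0 : 0 < s := lt_min one_pos (by positivity)
  have hs1 : s ≤ 1 := min_le_left _ _
  have hsK : s * (K - 1) ≤ ε := by
    have : s ≤ ε / (K - 1) := min_le_right _ _
    calc s * (K - 1) ≤ ε / (K - 1) * (K - 1) := by nlinarith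
      _ = ε := by field_simp
  obtain ⟨m, hm⟩ := pow_unbounded_of_one_lt (1 + 1 / s) (by norm_num : (1:ℝ) < 2)
  refine ⟨K ^ m, by positivity, ?_⟩
  intro a b ha hb
  have hGa : 0 ≤ G a := BL_nonneg G hmono hG0 ha
  have hGb : 0 ≤ G b := BL_nonneg G hmono hG0 hb
  by_cases hba : b ≤ s * a
  · have h1 : G (a + b) ≤ G (a + s * a) := by
      apply hmono (by simpa using add_nonneg ha hb)
        (Set.mem_Ici.mpr (by nlinarith)) (by linarith)
    have h2 : a + s * a = (1 - s) * a + s * (2 * a) := by ring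
    have h3 := hconv.2 (Set.mem_Ici.mpr ha) (Set.mem_Ici.mpr (by linarith : (0:ℝ) ≤ 2 * a))
      (by linarith : (0:ℝ) ≤ 1 - s) (le_of_lt hs0) (by ring)
    simp only [smul_eq_mul] at h3
    have h4 := hΔ2 a ha
    have h5 : G (a + b) ≤ (1 - s) * G a + s * (K * G a) := by
      calc G (a + b) ≤ G ((1-s) * a + s * (2*a)) := h2 ▸ h1
        _ ≤ (1 - s) * G a + s * G (2 * a) := h3
        _ ≤ (1 - s) * G a + s * (K * G a) := by nlinarith
    have hC : (0:ℝ) ≤ K ^ m * G b := by positivity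
    nlinarith
  · push_neg at hba
    have hab2 : a + b ≤ 2 ^ m * b := by
      have h5 : a ≤ b / s := by
        rw [le_div_iff₀ hs0]; nlinarith
      have h6 : a + b ≤ (1 + 1/s) * b := by
        have he : (1 + 1/s) * b = b / s + b := by ring
        linarith
      calc a + b ≤ (1 + 1/s) * b := h6
        _ ≤ 2 ^ m * b := by nlinarith
    have h7 : G (a + b) ≤ G (2 ^ m * b) :=
      hmono (Set.mem_Ici.mpr (by linarith)) (Set.mem_Ici.mpr (by positivity)) hab2
    have h8 := BL_pow G K hK hΔ2 m b hb
    nlinarith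

lemma BL_sum (G : ℝ → ℝ) (K : ℝ)
    (hmono : MonotoneOn G (Set.Ici 0)) (hG0 : G 0 = 0) (hK : 2 < K)
    (hΔ2 : ∀ x : ℝ, 0 ≤ x → G (2 * x) ≤ K * G x)
    (a b : ℝ) (ha : 0 ≤ a) (hb : 0 ≤ b) :
    G (a + b) ≤ K * (G a + G b) := by
  have hGa : 0 ≤ G a := BL_nonneg G hmono hG0 ha
  have hGb : 0 ≤ G b := BL_nonneg G hmono hG0 hb
  have hmax : a + b ≤ 2 * max a b := by
    rcases le_total a b with h | h
    · simp [max_eq_right h]; linarith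
    · simp [max_eq_left h]; linarith
  have h1 : G (a + b) ≤ G (2 * max a b) :=
    hmono (Set.mem_Ici.mpr (by linarith)) (Set.mem_Ici.mpr (by positivity)) hmax
  have h2 := hΔ2 (max a b) (le_max_of_le_left ha)
  have h3 : G (max a b) ≤ G a + G b := by
    rcases le_total a b with h | h
    · rw [max_eq_right h]; linarith
    · rw [max_eq_left h]; linarith
  nlinarith [lt_trans two_pos hK]

lemma BL_pt (G : ℝ → ℝ) (K : ℝ)
    (hconv : ConvexOn ℝ (Set.Ici 0) G)
    (hmono : MonotoneOn G (Set.Ici 0))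
    (hG0 : G 0 = 0) (hK : 2 < K)
    (hΔ2 : ∀ x : ℝ, 0 ≤ x → G (2 * x) ≤ K * G x)
    {ε : ℝ} (hε : 0 < ε) :
    ∃ C : ℝ, 0 ≤ C ∧ ∀ p q : ℝ,
      |(G |p| - G |q|)| ≤ ε * G |q| + C * G |p - q| := by
  obtain ⟨C, hC0, hC⟩ := BL_key G K hconv hmono hG0 hK hΔ2 hε
  refine ⟨C, hC0, ?_⟩
  intro p q
  set a : ℝ := min |p| |q| with ha
  set d : ℝ := |p - q| with hd
  have ha0 : 0 ≤ a := le_min (abs_nonneg _) (abs_nonneg _)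
  have hd0 : 0 ≤ d := abs_nonneg _
  have hpq : |(|p| - |q|)| ≤ d := abs_abs_sub_abs_le_abs_sub p q
  have hp_le : |p| ≤ a + d := by
    rcases le_total |p| |q| with h | h
    · have : a = |p| := min_eq_left h; linarith
    · have : a = |q| := min_eq_right h
      rw [abs_le] at hpq; linarith
  have hq_le : |q| ≤ a + d := by
    rcases le_total |p| |q| with h | h
    · have : a = |p| := min_eq_left h
      rw [abs_le] at hpq; linarith
    · have : a = |q| := min_eq_right h; linarith
  have hGp : G |p| ≤ G (a + d) :=
    hmono (Set.mem_Ici.mpr (abs_nonneg _)) (Set.mem_Ici.mpr (by linarith)) hp_le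
  have hGq : G |q| ≤ G (a + d) :=
    hmono (Set.mem_Ici.mpr (abs_nonneg _)) (Set.mem_Ici.mpr (by linarith)) hq_le
  have hGap : G a ≤ G |p| :=
    hmono (Set.mem_Ici.mpr ha0) (Set.mem_Ici.mpr (abs_nonneg _)) (min_le_left _ _)
  have hGaq : G a ≤ G |q| :=
    hmono (Set.mem_Ici.mpr ha0) (Set.mem_Ici.mpr (abs_nonneg _)) (min_le_right _ _)
  have hkey := hC a d ha0 hd0
  rw [abs_le]
  constructor <;> nlinarith

theorem brezis_lieb_orlicz (N : ℕ) (Ω : Set (EuclideanSpace ℝ (Fin N)))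
    (hΩ : MeasurableSet Ω)
    (G : ℝ → ℝ) (K : ℝ)
    (hcont : ContinuousOn G (Set.Ici 0))
    (hconv : ConvexOn ℝ (Set.Ici 0) G)
    (hmono : MonotoneOn G (Set.Ici 0))
    (hG0 : G 0 = 0)
    (hC1 : ∀ t : ℝ, 0 < t → HasDerivAt G (deriv G t) t)
    (hdcont : ContinuousOn (deriv G) (Set.Ioi 0))
    (hK : 2 < K)
    (hΔ2 : ∀ x : ℝ, 0 ≤ x → G (2 * x) ≤ K * G x)
    (hlim : Tendsto (fun x => G x / x) (nhdsWithin 0 (Set.Ioi 0)) (nhds 0))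
    (u : (EuclideanSpace ℝ (Fin N)) → ℝ) (un : ℕ → (EuclideanSpace ℝ (Fin N)) → ℝ)
    (hmeas : ∀ n, AEMeasurable (un n) (volume.restrict Ω))
    (humeas : AEMeasurable u (volume.restrict Ω))
    (hint : ∀ n, IntegrableOn (fun x => G |un n x|) Ω volume)
    (hbdd : ∃ M : ℝ, ∀ n, (∫ x in Ω, G |un n x|) ≤ M)
    (hae : ∀ᵐ x ∂(volume.restrict Ω), Tendsto (fun n => un n x) atTop (nhds (u x)))
    (huint : IntegrableOn (fun x => G |u x|) Ω volume) :
    Tendsto (fun n => (∫ x in Ω, G |un n x|) - ∫ x in Ω, G |un n x - u x|)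
      atTop (nhds (∫ x in Ω, G |u x|)) := by
  classical
  have hK0 : (0:ℝ) ≤ K := by linarith
  set μ := volume.restrict Ω with hμdef
  have Gc : Continuous (fun t : ℝ => G |t|) :=
    hcont.comp_continuous continuous_abs (fun x => Set.mem_Ici.mpr (abs_nonneg x))
  have Gnn : ∀ t : ℝ, 0 ≤ G |t| := fun t => BL_nonneg G hmono hG0 (abs_nonneg t)
  have hdm : ∀ n, AEMeasurable (fun x => un n x - u x) μ := fun n => (hmeas n).sub humeas
  have hGm : ∀ {f : EuclideanSpace ℝ (Fin N) → ℝ}, AEMeasurable f μ →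
      AEMeasurable (fun x => G |f x|) μ :=
    fun hf => Gc.measurable.comp_aemeasurable hf
  -- integrability of G |un - u|
  have hGd_int : ∀ n, Integrable (fun x => G |un n x - u x|) μ := by
    intro n
    refine Integrable.mono' (((hint n).add huint).const_mul K)
      (hGm (hdm n)).aestronglyMeasurable ?_
    filter_upwards with x
    rw [Real.norm_eq_abs, abs_of_nonneg (Gnn _)]
    calc G |un n x - u x| ≤ G (|un n x| + |u x|) :=
          hmono (Set.mem_Ici.mpr (abs_nonneg _))
            (Set.mem_Ici.mpr (add_nonneg (abs_nonneg _) (abs_nonneg _))) (abs_sub _ _)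
      _ ≤ K * (G |un n x| + G |u x|) :=
          BL_sum G K hmono hG0 hK hΔ2 _ _ (abs_nonneg _) (abs_nonneg _)
  -- uniform bound on ∫ G |un - u|
  obtain ⟨M, hM⟩ := hbdd
  have hIu0 : 0 ≤ ∫ x in Ω, G |u x| := integral_nonneg (fun x => Gnn _)
  set B : ℝ := K * (M + ∫ x in Ω, G |u x|) with hB
  have hBd : ∀ n, (∫ x in Ω, G |un n x - u x|) ≤ B := by
    intro n
    have h1 : (∫ x in Ω, G |un n x - u x|) ≤ ∫ x in Ω, K * (G |un n x| + G |u x|) := by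
      refine integral_mono (hGd_int n) (((hint n).add huint).const_mul K) ?_
      intro x
      calc G |un n x - u x| ≤ G (|un n x| + |u x|) :=
            hmono (Set.mem_Ici.mpr (abs_nonneg _))
              (Set.mem_Ici.mpr (add_nonneg (abs_nonneg _) (abs_nonneg _))) (abs_sub _ _)
        _ ≤ K * (G |un n x| + G |u x|) :=
            BL_sum G K hmono hG0 hK hΔ2 _ _ (abs_nonneg _) (abs_nonneg _)
    have h2 : (∫ x in Ω, K * (G |un n x| + G |u x|))
        = K * ((∫ x in Ω, G |un n x|) + ∫ x in Ω, G |u x|) := by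
      rw [show (fun x => K * (G |un n x| + G |u x|)) = fun x => K * ((fun x => G |un n x|) x + (fun x => G |u x|) x) from rfl]
      rw [integral_const_mul, integral_add (hint n) huint]
    have h3 : (∫ x in Ω, G |un n x|) + (∫ x in Ω, G |u x|) ≤ M + ∫ x in Ω, G |u x| := by
      linarith [hM n]
    calc (∫ x in Ω, G |un n x - u x|) ≤ _ := h1
      _ = K * ((∫ x in Ω, G |un n x|) + ∫ x in Ω, G |u x|) := h2
      _ ≤ B := mul_le_mul_of_nonneg_left h3 hK0
  have hB0 : 0 ≤ B := le_trans (integral_nonneg (fun x => Gnn _)) (hBd 0)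
  -- the error functions
  set h : ℕ → (EuclideanSpace ℝ (Fin N)) → ℝ :=
    fun n x => |(G |un n x| - G |un n x - u x| - G |u x|)| with hhdef
  have hh_meas : ∀ n, AEMeasurable (h n) μ := by
    intro n
    exact continuous_abs.measurable.comp_aemeasurable
      (((hGm (hmeas n)).sub (hGm (hdm n))).sub (hGm humeas))
  have hh_nonneg : ∀ n x, 0 ≤ h n x := fun n x => abs_nonneg _
  have hh_bound : ∀ n x, h n x ≤ G |un n x| + G |un n x - u x| + G |u x| := by
    intro n x
    have h1 : |(G |un n x| - G |un n x - u x| - G |u x|)|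
        ≤ |(G |un n x| - G |un n x - u x|)| + |(G |u x|)| := abs_sub _ _
    have h2 : |(G |un n x| - G |un n x - u x|)| ≤ |(G |un n x|)| + |(G |un n x - u x|)| :=
      abs_sub _ _
    rw [abs_of_nonneg (Gnn _)] at h1
    rw [abs_of_nonneg (Gnn _), abs_of_nonneg (Gnn _)] at h2
    simp only [hhdef]
    linarith
  have hh_int : ∀ n, Integrable (h n) μ := by
    intro n
    refine Integrable.mono' (((hint n).add (hGd_int n)).add huint)
      (hh_meas n).aestronglyMeasurable ?_
    filter_upwards with x
    rw [Real.norm_eq_abs, abs_of_nonneg (hh_nonneg n x)]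
    exact hh_bound n x
  -- core: ∫ h n → 0
  have hcore : Tendsto (fun n => ∫ x in Ω, h n x) atTop (nhds 0) := by
    rw [Metric.tendsto_atTop]
    intro ε hε
    set ε' : ℝ := ε / (2 * (B + 1)) with hε'def
    have hε'0 : 0 < ε' := by positivity
    obtain ⟨C, hC0, hC⟩ := BL_pt G K hconv hmono hG0 hK hΔ2 hε'0
    set f : ℕ → (EuclideanSpace ℝ (Fin N)) → ℝ :=
      fun n x => max (h n x - ε' * G |un n x - u x|) 0 with hfdef
    have hf_meas : ∀ n, AEStronglyMeasurable (f n) μ := by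
      intro n
      exact (((hh_meas n).sub ((hGm (hdm n)).const_mul ε')).max
        aemeasurable_const).aestronglyMeasurable
    have hf_nonneg : ∀ n x, 0 ≤ f n x := fun n x => le_max_right _ _
    have hf_le : ∀ n x, f n x ≤ (C + 1) * G |u x| := by
      intro n x
      apply max_le _ (mul_nonneg (by linarith) (Gnn _))
      have hpt := hC (un n x) (un n x - u x)
      have heq : un n x - (un n x - u x) = u x := by ring
      rw [heq] at hpt
      have h1 : h n x ≤ |(G |un n x| - G |un n x - u x|)| + G |u x| := by
        have := abs_sub (G |un n x| - G |un n x - u x|) (G |u x|)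
        rw [abs_of_nonneg (Gnn _)] at this
        simpa [hhdef] using this
      linarith
    have hf_bound : ∀ n, ∀ᵐ x ∂μ, ‖f n x‖ ≤ (C + 1) * G |u x| := by
      intro n
      filter_upwards with x
      rw [Real.norm_eq_abs, abs_of_nonneg (hf_nonneg n x)]
      exact hf_le n x
    have hf_tend : ∀ᵐ x ∂μ, Tendsto (fun n => f n x) atTop (nhds 0) := by
      filter_upwards [hae] with x hx
      have h1 : Tendsto (fun n => G |un n x|) atTop (nhds (G |u x|)) :=
        (Gc.tendsto (u x)).comp hx
      have h2 : Tendsto (fun n => un n x - u x) atTop (nhds 0) := by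
        simpa using hx.sub (tendsto_const_nhds (x := u x))
      have h3 : Tendsto (fun n => G |un n x - u x|) atTop (nhds (G |(0:ℝ)|)) :=
        (Gc.tendsto 0).comp h2
      rw [abs_zero, hG0] at h3
      have h4 : Tendsto (fun n => h n x) atTop (nhds 0) := by
        have h5 := ((h1.sub h3).sub (tendsto_const_nhds (x := G |u x|))).abs
        simpa [hhdef] using h5
      have h6 : Tendsto (fun n => ε' * G |un n x - u x|) atTop (nhds 0) := by
        simpa using h3.const_mul ε'
      have h7 := (h4.sub h6).max (tendsto_const_nhds (x := (0:ℝ)))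
      simpa [hfdef] using h7
    have hDCT : Tendsto (fun n => ∫ x in Ω, f n x) atTop (nhds 0) := by
      have := tendsto_integral_of_dominated_convergence (μ := μ)
        (F := f) (f := fun _ => (0:ℝ)) (bound := fun x => (C + 1) * G |u x|)
        hf_meas (huint.const_mul (C + 1)) hf_bound hf_tend
      simpa using this
    have hf_int : ∀ n, Integrable (f n) μ := by
      intro n
      refine Integrable.mono' (huint.const_mul (C + 1)) (hf_meas n) ?_
      exact Eventually.of_forall fun x => by
        rw [Real.norm_eq_abs, abs_of_nonneg (hf_nonneg n x)]; exact hf_le n x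
    rw [Metric.tendsto_atTop] at hDCT
    obtain ⟨Nn, hNn⟩ := hDCT (ε / 2) (by positivity)
    refine ⟨Nn, fun n hn => ?_⟩
    have hfn := hNn n hn
    rw [Real.dist_eq, sub_zero] at hfn ⊢
    have hIf0 : 0 ≤ ∫ x in Ω, f n x := integral_nonneg (hf_nonneg n)
    rw [abs_of_nonneg hIf0] at hfn
    rw [abs_of_nonneg (integral_nonneg (hh_nonneg n))]
    have hptw : ∀ x, h n x ≤ f n x + ε' * G |un n x - u x| := by
      intro x
      have := le_max_left (h n x - ε' * G |un n x - u x|) 0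
      simp only [hfdef]
      linarith
    have hIle : (∫ x in Ω, h n x) ≤ (∫ x in Ω, f n x) + ε' * ∫ x in Ω, G |un n x - u x| := by
      have h1 : (∫ x in Ω, h n x) ≤ ∫ x in Ω, (f n x + ε' * G |un n x - u x|) :=
        integral_mono (hh_int n) ((hf_int n).add ((hGd_int n).const_mul ε')) hptw
      have h2 : (∫ x in Ω, (f n x + ε' * G |un n x - u x|))
          = (∫ x in Ω, f n x) + ∫ x in Ω, ε' * G |un n x - u x| :=
        integral_add (hf_int n) ((hGd_int n).const_mul ε')
      have h3 : (∫ x in Ω, ε' * G |un n x - u x|) = ε' * ∫ x in Ω, G |un n x - u x| :=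
        integral_const_mul ε' _
      linarith
    have hεB : ε' * (∫ x in Ω, G |un n x - u x|) ≤ ε / 2 := by
      have h1 : ε' * (∫ x in Ω, G |un n x - u x|) ≤ ε' * B :=
        mul_le_mul_of_nonneg_left (hBd n) (le_of_lt hε'0)
      have h2 : ε' * B ≤ ε / 2 := by
        rw [hε'def, div_mul_eq_mul_div, div_le_div_iff₀ (by positivity) (by norm_num)]
        nlinarith
      linarith
    linarith
  -- conclude
  rw [← tendsto_sub_nhds_zero_iff]
  apply squeeze_zero_norm _ hcore
  intro n
  rw [Real.norm_eq_abs]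
  have hrep : (∫ x in Ω, G |un n x|) - (∫ x in Ω, G |un n x - u x|) - (∫ x in Ω, G |u x|)
      = ∫ x in Ω, (G |un n x| - G |un n x - u x| - G |u x|) := by
    have i1 : Integrable (fun x => G |un n x| - G |un n x - u x|) μ :=
      (hint n).sub (hGd_int n)
    rw [integral_sub i1 huint, integral_sub (hint n) (hGd_int n)]
  rw [hrep]
  calc |∫ x in Ω, (G |un n x| - G |un n x - u x| - G |u x|)|
      ≤ ∫ x in Ω, |(G |un n x| - G |un n x - u x| - G |u x|)| := by
        simpa [Real.norm_eq_abs] using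
          norm_integral_le_integral_norm (μ := μ) (fun x => G |un n x| - G |un n x - u x| - G |u x|)
    _ = ∫ x in Ω, h n x := rfl
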